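/- Let n ≥ 2 and let t_1, …, t_n be integers with t_1 ≥ −5, t_i ≥ −2 for 2 ≤ i ≤ n−1, t_n ≥ −1, satisfying Σ t_i = 0 and Σ t_i² + 4Σ_{i=2}^{n−1} t_i + 10 t_1 + 2 t_n = 0. Then the multiset {5 + t_1, 2 + t_2, …, 2 + t_{n−1}, 1 + t_n} is one of: {5, 2^{n−2}, 1}, {4², 2^{n−4}, 1²}, {4, 3³, 2^{n−7}, 1³}, {3⁶, 2^{n−10}, 1⁴}, {4, 3², 2^{n−4}, 0}, or {3⁵, 2^{n−7}, 1, 0}. -/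

import Mathlib

open Multiset

lemma classify' (S : Multiset ℤ) (hS : ∀ x ∈ S, 0 ≤ x)
    (hsq : (S.map (fun x => (x-2)^2)).sum ≤ 10) :
    ∃ p q m r s u : ℕ, S = replicate p 0 + replicate q 1 + replicate m 2 +
      replicate r 3 + replicate s 4 + replicate u 5 := by
  induction S using Multiset.induction with
  | empty => exact ⟨0,0,0,0,0,0, by simp⟩
  | cons x S ih =>
    have hx : 0 ≤ x := hS x (mem_cons_self _ _)
    have hnn : 0 ≤ (S.map (fun x => (x-2)^2)).sum := by
      apply Multiset.sum_nonneg
      intro y hy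
      simp only [Multiset.mem_map] at hy
      obtain ⟨z, _, rfl⟩ := hy
      positivity
    simp only [Multiset.map_cons, Multiset.sum_cons] at hsq
    have hx2 : (x-2)^2 ≤ 10 := by linarith
    have hsq' : (S.map (fun x => (x-2)^2)).sum ≤ 10 := by nlinarith [sq_nonneg (x-2)]
    obtain ⟨p,q,m,r,s,u,hdec⟩ := ih (fun y hy => hS y (mem_cons_of_mem hy)) hsq'
    have hx3 : x ≤ 5 := by nlinarith
    have hc : x = 0 ∨ x = 1 ∨ x = 2 ∨ x = 3 ∨ x = 4 ∨ x = 5 := by omega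
    rcases hc with rfl|rfl|rfl|rfl|rfl|rfl
    · refine ⟨p+1,q,m,r,s,u, ?_⟩
      rw [hdec, Multiset.ext]; intro y
      simp only [count_cons, count_add, count_replicate]
      split_ifs <;> omega
    · refine ⟨p,q+1,m,r,s,u, ?_⟩
      rw [hdec, Multiset.ext]; intro y
      simp only [count_cons, count_add, count_replicate]
      split_ifs <;> omega
    · refine ⟨p,q,m+1,r,s,u, ?_⟩
      rw [hdec, Multiset.ext]; intro y
      simp only [count_cons, count_add, count_replicate]
      split_ifs <;> omega
    · refine ⟨p,q,m,r+1,s,u, ?_⟩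
      rw [hdec, Multiset.ext]; intro y
      simp only [count_cons, count_add, count_replicate]
      split_ifs <;> omega
    · refine ⟨p,q,m,r,s+1,u, ?_⟩
      rw [hdec, Multiset.ext]; intro y
      simp only [count_cons, count_add, count_replicate]
      split_ifs <;> omega
    · refine ⟨p,q,m,r,s,u+1, ?_⟩
      rw [hdec, Multiset.ext]; intro y
      simp only [count_cons, count_add, count_replicate]
      split_ifs <;> omega

set_option maxHeartbeats 1600000 in
lemma arith6 (p q r s u : ℕ)
    (e1 : -2*(p:ℤ) - q + r + 2*s + 3*u = 2)
    (e2 : 4*(p:ℤ) + q + r + 4*s + 9*u = 10) :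
    (p = 0 ∧ q = 1 ∧ r = 0 ∧ s = 0 ∧ u = 1) ∨
    (p = 0 ∧ q = 2 ∧ r = 0 ∧ s = 2 ∧ u = 0) ∨
    (p = 0 ∧ q = 3 ∧ r = 3 ∧ s = 1 ∧ u = 0) ∨
    (p = 0 ∧ q = 4 ∧ r = 6 ∧ s = 0 ∧ u = 0) ∨
    (p = 1 ∧ q = 0 ∧ r = 2 ∧ s = 1 ∧ u = 0) ∨
    (p = 1 ∧ q = 1 ∧ r = 5 ∧ s = 0 ∧ u = 0) := by
  have hp : p ≤ 2 := by omega
  have hs : s ≤ 2 := by omega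
  have hu : u ≤ 1 := by omega
  interval_cases p <;> interval_cases s <;> interval_cases u <;> omega

set_option maxHeartbeats 1600000 in
theorem propeller_Q_degree_sequences (n : ℕ) (hn : 2 ≤ n) (t : ℕ → ℤ)
    (h1 : t 1 ≥ -5) (hmid : ∀ i : ℕ, 2 ≤ i → i ≤ n - 1 → t i ≥ -2) (hlast : t n ≥ -1)
    (hsum : ∑ i ∈ Finset.Icc 1 n, t i = 0)
    (hsq : ∑ i ∈ Finset.Icc 1 n, (t i) ^ 2 + 4 * ∑ i ∈ Finset.Icc 2 (n - 1), t i
      + 10 * t 1 + 2 * t n = 0)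
    (M : Multiset ℤ)
    (hM : M = (5 + t 1) ::ₘ (1 + t n) ::ₘ ((Finset.Icc 2 (n - 1)).val.map fun i => 2 + t i)) :
    M = 5 ::ₘ 1 ::ₘ Multiset.replicate (n - 2) 2 ∨
    M = Multiset.replicate 2 4 + Multiset.replicate (n - 4) 2 + Multiset.replicate 2 1 ∨
    M = 4 ::ₘ (Multiset.replicate 3 3 + Multiset.replicate (n - 7) 2 + Multiset.replicate 3 1) ∨
    M = Multiset.replicate 6 3 + Multiset.replicate (n - 10) 2 + Multiset.replicate 4 1 ∨
    M = 4 ::ₘ 0 ::ₘ (Multiset.replicate 2 3 + Multiset.replicate (n - 4) 2) ∨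
    M = 0 ::ₘ 1 ::ₘ (Multiset.replicate 5 3 + Multiset.replicate (n - 7) 2) := by
  -- split the index sums
  have hsplit : Finset.Icc 1 n = insert 1 (insert n (Finset.Icc 2 (n-1))) := by
    ext i; simp only [Finset.mem_Icc, Finset.mem_insert]; omega
  have h1n : (1:ℕ) ∉ insert n (Finset.Icc 2 (n-1)) := by
    simp only [Finset.mem_insert, Finset.mem_Icc]; omega
  have h2n : n ∉ Finset.Icc 2 (n-1) := by
    simp only [Finset.mem_Icc]; omega
  rw [hsplit, Finset.sum_insert h1n, Finset.sum_insert h2n] at hsum hsq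
  -- nonnegativity of elements of M
  have hnn : ∀ x ∈ M, (0:ℤ) ≤ x := by
    intro x hx
    rw [hM] at hx
    rcases Multiset.mem_cons.1 hx with rfl | hx
    · linarith
    rcases Multiset.mem_cons.1 hx with rfl | hx
    · linarith
    obtain ⟨i, hi, rfl⟩ := Multiset.mem_map.1 hx
    have hi' : 2 ≤ i ∧ i ≤ n - 1 := by
      have := Finset.mem_Icc.1 (show i ∈ Finset.Icc 2 (n-1) from hi)
      exact this
    have := hmid i hi'.1 hi'.2
    linarith
  -- sums over M
  have hTsum : ((Finset.Icc 2 (n-1)).val.map t).sum = ∑ i ∈ Finset.Icc 2 (n-1), t i := rfl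
  have hTsq : ((Finset.Icc 2 (n-1)).val.map (fun i => (t i)^2)).sum
      = ∑ i ∈ Finset.Icc 2 (n-1), (t i)^2 := rfl
  have hsum2 : (M.map (fun x => x - 2)).sum = 2 := by
    rw [hM]
    simp only [Multiset.map_cons, Multiset.sum_cons, Multiset.map_map, Function.comp]
    have : ((Finset.Icc 2 (n-1)).val.map (fun i => 2 + t i - 2)).sum
        = ∑ i ∈ Finset.Icc 2 (n-1), t i := by
      rw [← hTsum]; congr 1; apply Multiset.map_congr rfl; intro i _; ring
    rw [this]; linarith
  have hsq2 : (M.map (fun x => (x - 2)^2)).sum = 10 := by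
    rw [hM]
    simp only [Multiset.map_cons, Multiset.sum_cons, Multiset.map_map, Function.comp]
    have : ((Finset.Icc 2 (n-1)).val.map (fun i => (2 + t i - 2)^2)).sum
        = ∑ i ∈ Finset.Icc 2 (n-1), (t i)^2 := by
      rw [← hTsq]; congr 1; apply Multiset.map_congr rfl; intro i _; ring_nf
    rw [this]; nlinarith [hsum, hsq]
  -- cardinality
  have hcard : Multiset.card M = n := by
    rw [hM]
    simp only [Multiset.card_cons, Multiset.card_map]
    have : ((Finset.Icc 2 (n-1)).val).card = (Finset.Icc 2 (n-1)).card := rfl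
    rw [this, Nat.card_Icc]
    omega
  -- classify
  obtain ⟨p, q, m, r, s, u, hdec⟩ := classify' M hnn (le_of_eq hsq2)
  -- extract the count equations
  rw [hdec] at hsum2 hsq2 hcard
  simp only [Multiset.map_add, Multiset.map_replicate, Multiset.sum_add,
    Multiset.sum_replicate, Multiset.card_add, Multiset.card_replicate,
    nsmul_eq_mul] at hsum2 hsq2 hcard
  norm_num at hsum2 hsq2
  have e1 : -2*(p:ℤ) - q + r + 2*s + 3*u = 2 := by linarith
  have e2 : 4*(p:ℤ) + q + r + 4*s + 9*u = 10 := by linarith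
  rcases arith6 p q r s u e1 e2 with ⟨rfl,rfl,rfl,rfl,rfl⟩|⟨rfl,rfl,rfl,rfl,rfl⟩|
    ⟨rfl,rfl,rfl,rfl,rfl⟩|⟨rfl,rfl,rfl,rfl,rfl⟩|⟨rfl,rfl,rfl,rfl,rfl⟩|⟨rfl,rfl,rfl,rfl,rfl⟩
  · refine Or.inl ?_
    have hm : m = n - 2 := by omega
    rw [hdec, hm, Multiset.ext]; intro y
    simp only [count_cons, count_add, count_replicate]
    split_ifs <;> omega
  · refine Or.inr (Or.inl ?_)
    have hm : m = n - 4 := by omega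
    rw [hdec, hm, Multiset.ext]; intro y
    simp only [count_cons, count_add, count_replicate]
    split_ifs <;> omega
  · refine Or.inr (Or.inr (Or.inl ?_))
    have hm : m = n - 7 := by omega
    rw [hdec, hm, Multiset.ext]; intro y
    simp only [count_cons, count_add, count_replicate]
    split_ifs <;> omega
  · refine Or.inr (Or.inr (Or.inr (Or.inl ?_)))
    have hm : m = n - 10 := by omega
    rw [hdec, hm, Multiset.ext]; intro y
    simp only [count_cons, count_add, count_replicate]
    split_ifs <;> omega
  · refine Or.inr (Or.inr (Or.inr (Or.inr (Or.inl ?_))))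
    have hm : m = n - 4 := by omega
    rw [hdec, hm, Multiset.ext]; intro y
    simp only [count_cons, count_add, count_replicate]
    split_ifs <;> omega
  · refine Or.inr (Or.inr (Or.inr (Or.inr (Or.inr ?_))))
    have hm : m = n - 7 := by omega
    rw [hdec, hm, Multiset.ext]; intro y
    simp only [count_cons, count_add, count_replicate]
    split_ifs <;> omega
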